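/- The set 𝐟(𝐄) ∩ 𝐘′ is closed in the subspace topology of 𝐘′: if a point y* ∈ 𝐘′ lies in the closure (in ℂⁿ) of the image 𝐟(𝐄), then y* ∈ 𝐟(𝐄), i.e., there exists e* ∈ 𝐄 with 𝐟(e*) = y*. -/

import Mathlib

open Finset

/-- The set `𝐄` of tuples of nonzero, pairwise distinct complex numbers. -/
def Eset (n : ℕ) : Set (Fin n → ℂ) :=
  {e | (∀ j, e j ≠ 0) ∧ Function.Injective e}

/-- The set `𝐘′` of tuples of nonzero complex numbers whose reciprocals have nonvanishing
sums over every nonempty subset of indices. -/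
def Y'set (n : ℕ) : Set (Fin n → ℂ) :=
  {y | (∀ j, y j ≠ 0) ∧ ∀ J : Finset (Fin n), J.Nonempty → ∑ j ∈ J, (y j)⁻¹ ≠ 0}

/-- The polynomial map `𝐟`, `𝐟_j(e) = e_j ∏_{k≠j} (e_j - e_k)`. -/
def fmap (n : ℕ) (e : Fin n → ℂ) : Fin n → ℂ :=
  fun j => e j * ∏ k ∈ Finset.univ.erase j, (e j - e k)

open Finset Metric Complex MeasureTheory Filter Topology


lemma my_circleIntegral_finset_sum {ι : Type*} (s : Finset ι) (f : ι → ℂ → ℂ) (c : ℂ) (R : ℝ)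
    (h : ∀ i ∈ s, CircleIntegrable (f i) c R) :
    (∮ z in C(c, R), ∑ i ∈ s, f i z) = ∑ i ∈ s, ∮ z in C(c, R), f i z := by
  simp only [circleIntegral, smul_sum]
  rw [intervalIntegral.integral_finset_sum]
  exact fun i hi => (h i hi).out

lemma my_integral_sub_inv_of_not_mem {c w : ℂ} {R : ℝ} (hR : 0 ≤ R)
    (hw : w ∉ closedBall c R) :
    (∮ z in C(c, R), (z - w)⁻¹) = 0 := by
  apply circleIntegral_eq_zero_of_differentiable_on_off_countable hR Set.countable_empty
  · intro z hz
    refine ContinuousAt.continuousWithinAt ?_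
    exact (continuousAt_id.sub continuousAt_const).inv₀ (sub_ne_zero.2 (fun h => hw (by have h' : z = w := h; rw [← h']; exact hz)))
  · intro z hz
    exact (differentiableAt_id.sub_const _).inv (sub_ne_zero.2
      (fun h => hw (h ▸ ball_subset_closedBall hz.1)))

lemma my_residue_sum {N : ℕ} (v cc : Fin N → ℂ) {R : ℝ} (hR : 0 < R)
    (hv : ∀ i, ‖v i‖ ≠ R) :
    (∮ z in C(0, R), ∑ i, cc i * (z - v i)⁻¹)
      = (2 * ↑Real.pi * Complex.I) * ∑ i ∈ univ.filter (fun i => ‖v i‖ < R), cc i := by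
  have hint : ∀ i : Fin N, CircleIntegrable (fun z => cc i * (z - v i)⁻¹) 0 R := by
    intro i
    apply ContinuousOn.circleIntegrable hR.le
    apply ContinuousOn.mul continuousOn_const
    apply ContinuousOn.inv₀ (by fun_prop)
    intro z hz
    rw [mem_sphere_zero_iff_norm] at hz
    exact sub_ne_zero.2 (fun h => hv i (by rw [← h]; exact hz))
  rw [my_circleIntegral_finset_sum _ _ _ _ (fun i _ => hint i)]
  have key : ∀ i : Fin N, (∮ z in C(0, R), cc i * (z - v i)⁻¹)
      = if ‖v i‖ < R then (2 * ↑Real.pi * Complex.I) * cc i else 0 := by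
    intro i
    rw [circleIntegral.integral_const_mul]
    split_ifs with h
    · rw [circleIntegral.integral_sub_inv_of_mem_ball (by simpa [mem_ball_zero_iff] using h)]
      ring
    · rw [my_integral_sub_inv_of_not_mem hR.le
        (by simp only [mem_closedBall_zero_iff]; push_neg at h ⊢; exact lt_of_le_of_ne h (hv i).symm)]
      exact mul_zero _
  simp only [key]
  rw [Finset.mul_sum, Finset.sum_filter]

lemma my_partial_fraction {N : ℕ} (hN : 0 < N) (v : Fin N → ℂ) (hv : Function.Injective v)
    (x : ℂ) (hx : ∀ i, x ≠ v i) :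
    (∏ i, (x - v i))⁻¹
      = ∑ i, (∏ j ∈ univ.erase i, (v i - v j))⁻¹ * (x - v i)⁻¹ := by
  have h1 : ∑ i, ∏ j ∈ univ.erase i, ((v i - v j)⁻¹ * (x - v j)) = 1 := by
    have := Lagrange.sum_basis (s := univ) (v := v) hv.injOn
      (univ_nonempty_iff.2 (Fin.pos_iff_nonempty.mp hN))
    have h2 := congrArg (Polynomial.eval x) this
    simpa [Lagrange.basis, Lagrange.basisDivisor, Polynomial.eval_finset_sum,
      Polynomial.eval_prod] using h2
  calc (∏ i, (x - v i))⁻¹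
      = (∑ i, ∏ j ∈ univ.erase i, ((v i - v j)⁻¹ * (x - v j))) * (∏ i, (x - v i))⁻¹ := by
        rw [h1, one_mul]
    _ = ∑ i, (∏ j ∈ univ.erase i, (v i - v j))⁻¹ * (x - v i)⁻¹ := by
        rw [sum_mul]
        refine sum_congr rfl fun i _ => ?_
        have hB : (∏ j ∈ univ.erase i, (x - v j)) ≠ 0 :=
          prod_ne_zero_iff.2 fun j _ => sub_ne_zero.2 (hx j)
        have hxi : x - v i ≠ 0 := sub_ne_zero.2 (hx i)
        rw [prod_mul_distrib, ← Finset.mul_prod_erase univ _ (mem_univ i), prod_inv_distrib,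
          mul_inv]
        rw [show (∏ j ∈ univ.erase i, (v i - v j))⁻¹ * (∏ j ∈ univ.erase i, (x - v j)) *
            ((x - v i)⁻¹ * (∏ j ∈ univ.erase i, (x - v j))⁻¹)
            = (∏ j ∈ univ.erase i, (v i - v j))⁻¹ * (x - v i)⁻¹ *
              ((∏ j ∈ univ.erase i, (x - v j)) * (∏ j ∈ univ.erase i, (x - v j))⁻¹) from by ring,
          mul_inv_cancel₀ hB, mul_one]

lemma key_estimate (n : ℕ) (e : Fin n → ℂ) (he0 : ∀ j, e j ≠ 0) (hei : Function.Injective e)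
    (J : Finset (Fin n)) {δ M : ℝ} (hδ : 0 < δ) (hM : 0 < M)
    (hsup : ∀ k, ‖e k‖ ≤ M)
    (hout : ∀ k, k ∉ J → ‖e k‖ ≤ δ * M / 2)
    (hin : ∀ j ∈ J, 3/2 * (δ * M) ≤ ‖e j‖) :
    ‖∑ j ∈ J, (fmap n e j)⁻¹‖ ≤ (2 + 2 * (2/δ)^n) / M^n := by
  set v : Fin (n+1) → ℂ := Fin.cons 0 e with hvdef
  have hv0 : v 0 = 0 := rfl
  have hvs : ∀ k : Fin n, v k.succ = e k := fun k => rfl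
  have hvinj : Function.Injective v := by
    rw [hvdef, Fin.cons_injective_iff]
    exact ⟨fun ⟨j, hj⟩ => he0 j hj, hei⟩
  set cc : Fin (n+1) → ℂ := fun i => (∏ j ∈ univ.erase i, (v i - v j))⁻¹ with hccdef
  have hccs : ∀ j : Fin n, cc j.succ = (fmap n e j)⁻¹ := by
    intro j
    have hU : (univ : Finset (Fin (n+1))).erase j.succ
        = insert (0 : Fin (n+1)) ((univ.erase j).image Fin.succ) := by
      ext i
      refine Fin.cases ?_ (fun k => ?_) i <;>
        simp [Fin.succ_ne_zero, (Fin.succ_injective n).eq_iff, Fin.succ_inj, eq_comm]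
    rw [hccdef]
    simp only []
    rw [hU, prod_insert (by simp [Fin.succ_ne_zero]),
      prod_image (fun a _ b _ h => (Fin.succ_injective n) h)]
    simp only [hvs, hv0, sub_zero]
    rfl
  have hvnorm : ∀ i, ‖v i‖ ≤ M := by
    intro i; refine Fin.cases ?_ (fun k => ?_) i
    · simpa [hv0] using hM.le
    · rw [hvs]; exact hsup k
  have hδM : 0 < δ * M := mul_pos hδ hM
  have hne2 : ∀ i, ‖v i‖ ≠ 2 * M := fun i => ne_of_lt (lt_of_le_of_lt (hvnorm i) (by linarith))
  have hne1 : ∀ i, ‖v i‖ ≠ δ * M := by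
    intro i; refine Fin.cases ?_ (fun k => ?_) i
    · rw [hv0, norm_zero]; exact (ne_of_lt hδM)
    · rw [hvs]; by_cases hk : k ∈ J
      · exact ne_of_gt (lt_of_lt_of_le (by linarith) (hin k hk))
      · exact ne_of_lt (lt_of_le_of_lt (hout k hk) (by linarith))
  have hS2 : (∮ z in C(0, 2*M), ∑ i, cc i * (z - v i)⁻¹)
      = (2 * ↑Real.pi * Complex.I) * ∑ i, cc i := by
    rw [my_residue_sum v cc (by linarith) hne2]
    congr 1
    rw [filter_true_of_mem (fun i _ => lt_of_le_of_lt (hvnorm i) (by linarith))]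
  have hS1 : (∮ z in C(0, δ*M), ∑ i, cc i * (z - v i)⁻¹)
      = (2 * ↑Real.pi * Complex.I) * (cc 0 + ∑ k ∈ univ \ J, cc k.succ) := by
    rw [my_residue_sum v cc hδM hne1]
    congr 1
    rw [Finset.sum_filter, Fin.sum_univ_succ, if_pos (by rw [hv0, norm_zero]; exact hδM)]
    congr 1
    rw [← Finset.sum_filter]
    congr 1
    ext k
    simp only [mem_filter, mem_univ, true_and, mem_sdiff, hvs]
    constructor
    · intro hlt; rw [Finset.mem_sdiff]; refine ⟨mem_univ _, fun hk => ?_⟩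
      have := hin k hk
      linarith
    · intro hk
      exact lt_of_le_of_lt (hout k (Finset.mem_sdiff.1 hk).2) (by linarith)
  have hsum : ∑ j ∈ J, (fmap n e j)⁻¹ = ∑ j ∈ J, cc j.succ :=
    sum_congr rfl fun j _ => (hccs j).symm
  have hsplit : ∑ k ∈ univ \ J, cc k.succ + ∑ k ∈ J, cc k.succ = ∑ k : Fin n, cc k.succ :=
    Finset.sum_sdiff (subset_univ J)
  have hdiff : (∮ z in C(0, 2*M), ∑ i, cc i * (z - v i)⁻¹)
        - (∮ z in C(0, δ*M), ∑ i, cc i * (z - v i)⁻¹)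
      = (2 * ↑Real.pi * Complex.I) * ∑ j ∈ J, (fmap n e j)⁻¹ := by
    rw [hS2, hS1, hsum, Fin.sum_univ_succ, ← hsplit]; ring
  have hbound : ∀ R b : ℝ, 0 < R → 0 < b → (∀ z ∈ sphere (0:ℂ) R, ∀ i, b ≤ ‖z - v i‖) →
      ‖∮ z in C(0, R), ∑ i, cc i * (z - v i)⁻¹‖ ≤ 2 * Real.pi * R * (b^(n+1))⁻¹ := by
    intro R b hR hb hsep
    have hEq : Set.EqOn (fun z => ∑ i, cc i * (z - v i)⁻¹)
        (fun z => (∏ i, (z - v i))⁻¹) (sphere (0:ℂ) R) := by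
      intro z hz
      have hx : ∀ i, z ≠ v i := by
        intro i h
        have := hsep z hz i
        rw [h, sub_self, norm_zero] at this; linarith
      simp only []
      rw [my_partial_fraction (Nat.succ_pos n) v hvinj z hx]
    rw [circleIntegral.integral_congr hR.le hEq]
    refine circleIntegral.norm_integral_le_of_norm_le_const hR.le ?_
    intro z hz
    have h1 : b^(n+1) ≤ ∏ i, ‖z - v i‖ := by
      calc b^(n+1) = ∏ _i : Fin (n+1), b := by
            rw [prod_const, card_univ, Fintype.card_fin]
        _ ≤ ∏ i, ‖z - v i‖ := prod_le_prod (fun _ _ => hb.le) (fun i _ => hsep z hz i)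
    rw [norm_inv, norm_prod]
    exact inv_anti₀ (pow_pos hb _) h1
  have hB2 : ‖∮ z in C(0, 2*M), ∑ i, cc i * (z - v i)⁻¹‖
      ≤ 2 * Real.pi * (2*M) * ((M)^(n+1))⁻¹ := by
    refine hbound (2*M) M (by linarith) hM ?_
    intro z hz i
    rw [mem_sphere_zero_iff_norm] at hz
    have h1 := norm_sub_norm_le z (v i)
    have h2 := hvnorm i
    linarith
  have hB1 : ‖∮ z in C(0, δ*M), ∑ i, cc i * (z - v i)⁻¹‖
      ≤ 2 * Real.pi * (δ*M) * ((δ*M/2)^(n+1))⁻¹ := by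
    refine hbound (δ*M) (δ*M/2) hδM (by linarith) ?_
    intro z hz i
    rw [mem_sphere_zero_iff_norm] at hz
    refine Fin.cases ?_ (fun k => ?_) i
    · rw [hv0, sub_zero, hz]; linarith
    · rw [hvs]
      have h1 := abs_norm_sub_norm_le z (e k)
      rw [abs_le] at h1
      by_cases hk : k ∈ J
      · have := hin k hk; linarith
      · have := hout k hk; linarith
  have hπ : (0:ℝ) < Real.pi := Real.pi_pos
  have h2πI : ‖(2 * ↑Real.pi * Complex.I : ℂ)‖ = 2 * Real.pi := by
    simp [_root_.abs_of_nonneg Real.pi_nonneg]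
  have hfinal : ‖∑ j ∈ J, (fmap n e j)⁻¹‖
      = (2 * Real.pi)⁻¹ * ‖(∮ z in C(0, 2*M), ∑ i, cc i * (z - v i)⁻¹)
        - (∮ z in C(0, δ*M), ∑ i, cc i * (z - v i)⁻¹)‖ := by
    rw [hdiff, norm_mul, h2πI, ← mul_assoc, inv_mul_cancel₀ (by positivity), one_mul]
  rw [hfinal]
  have hnorm_sub : ‖(∮ z in C(0, 2*M), ∑ i, cc i * (z - v i)⁻¹)
        - (∮ z in C(0, δ*M), ∑ i, cc i * (z - v i)⁻¹)‖
      ≤ 2 * Real.pi * (2*M) * ((M)^(n+1))⁻¹ + 2 * Real.pi * (δ*M) * ((δ*M/2)^(n+1))⁻¹ :=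
    le_trans (norm_sub_le _ _) (add_le_add hB2 hB1)
  have harith : (2 * Real.pi)⁻¹ * (2 * Real.pi * (2*M) * ((M)^(n+1))⁻¹
        + 2 * Real.pi * (δ*M) * ((δ*M/2)^(n+1))⁻¹)
      = (2 + 2 * (2/δ)^n) / M^n := by
    have hπ := Real.pi_pos
    rw [show ((δ*M/2)^(n+1)) = (δ*M/2)^n * (δ*M/2) from pow_succ _ _,
      show ((M)^(n+1)) = M^n * M from pow_succ _ _, div_pow, div_pow, mul_pow]
    field_simp
  calc (2 * Real.pi)⁻¹ * ‖(∮ z in C(0, 2*M), ∑ i, cc i * (z - v i)⁻¹)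
        - (∮ z in C(0, δ*M), ∑ i, cc i * (z - v i)⁻¹)‖
      ≤ (2 * Real.pi)⁻¹ * (2 * Real.pi * (2*M) * ((M)^(n+1))⁻¹
        + 2 * Real.pi * (δ*M) * ((δ*M/2)^(n+1))⁻¹) := by
        apply mul_le_mul_of_nonneg_left hnorm_sub (by positivity)
    _ = (2 + 2 * (2/δ)^n) / M^n := harith

lemma fmap_continuous (n : ℕ) : Continuous (fmap n) := by
  unfold fmap
  exact continuous_pi fun j => (continuous_apply j).mul
    (continuous_finset_prod _ fun k _ => (continuous_apply j).sub (continuous_apply k))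

lemma mem_Eset_of_fmap_ne_zero {n : ℕ} (e : Fin n → ℂ) (h : ∀ j, fmap n e j ≠ 0) :
    e ∈ Eset n := by
  constructor
  · intro j hj
    exact h j (by unfold fmap; rw [hj, zero_mul])
  · intro a b hab
    by_contra hne
    refine h a ?_
    unfold fmap
    apply mul_eq_zero_of_right
    exact Finset.prod_eq_zero (Finset.mem_erase.2 ⟨Ne.symm hne, mem_univ b⟩)
      (by rw [hab, sub_self])

/-- `𝐟(𝐄) ∩ 𝐘′` is closed in `𝐘′`: any `y* ∈ 𝐘′` in the closure of the
image `𝐟(𝐄)` already lies in `𝐟(𝐄)`. -/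
theorem fmap_image_inter_Y'_closed (n : ℕ) (hn : 1 ≤ n) (y : Fin n → ℂ)
    (hy : y ∈ Y'set n) (hcl : y ∈ closure (fmap n '' Eset n)) :
    ∃ e ∈ Eset n, fmap n e = y := by
  obtain ⟨u, hu_mem, hu_tend⟩ := mem_closure_iff_seq_limit.1 hcl
  choose E hE hfE using hu_mem
  have hfEy : Tendsto (fun m => fmap n (E m)) atTop (𝓝 y) := by
    simpa only [hfE] using hu_tend
  by_cases hbdd : ∃ R : ℝ, {m | ‖E m‖ ≤ R}.Infinite
  · -- bounded case
    obtain ⟨R, hR⟩ := hbdd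
    have hfreq : ∃ᶠ m in atTop, ‖E m‖ ≤ R := Nat.frequently_atTop_iff_infinite.2 hR
    obtain ⟨φ, hφ, hφR⟩ := Filter.extraction_of_frequently_atTop hfreq
    obtain ⟨estar, _, ψ, hψ, hconv⟩ :=
      (isCompact_closedBall (0 : Fin n → ℂ) R).tendsto_subseq
        (x := fun i => E (φ i)) (fun i => mem_closedBall_zero_iff.2 (hφR i))
    have htend1 : Tendsto (fun i => fmap n (E (φ (ψ i)))) atTop (𝓝 (fmap n estar)) :=
      ((fmap_continuous n).tendsto estar).comp hconv
    have htend2 : Tendsto (fun i => fmap n (E (φ (ψ i)))) atTop (𝓝 y) :=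
      hfEy.comp ((hφ.comp hψ).tendsto_atTop)
    have heq : fmap n estar = y := tendsto_nhds_unique htend1 htend2
    refine ⟨estar, mem_Eset_of_fmap_ne_zero estar fun j => ?_, heq⟩
    rw [heq]
    exact hy.1 j
  · -- unbounded case
    exfalso
    push_neg at hbdd
    have hMtop : Tendsto (fun m => ‖E m‖) atTop atTop := by
      rw [Filter.tendsto_atTop]
      intro R
      have hfin : {m | ‖E m‖ ≤ R}.Finite := hbdd R
      have hev := hfin.eventually_cofinite_notMem
      rw [Nat.cofinite_eq_atTop] at hev
      filter_upwards [hev] with m hm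
      exact (not_le.1 hm).le
    set w : ℕ → Fin n → ℂ := fun m => ‖E m‖⁻¹ • E m with hwdef
    have hwball : ∀ m, w m ∈ closedBall (0 : Fin n → ℂ) 1 := by
      intro m
      rw [mem_closedBall_zero_iff, hwdef]
      rcases eq_or_ne (‖E m‖) 0 with h | h
      · simp [h]
      · rw [norm_smul]
        simp only [norm_inv, norm_norm]
        rw [inv_mul_cancel₀ h]
    obtain ⟨z, _, ψ, hψ, hwz⟩ :=
      (isCompact_closedBall (0 : Fin n → ℂ) 1).tendsto_subseq hwball
    -- pass to subsequence
    set E' : ℕ → Fin n → ℂ := fun m => E (ψ m) with hE'def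
    have hE'mem : ∀ m, E' m ∈ Eset n := fun m => hE (ψ m)
    have hfE'y : Tendsto (fun m => fmap n (E' m)) atTop (𝓝 y) :=
      hfEy.comp hψ.tendsto_atTop
    have hM'top : Tendsto (fun m => ‖E' m‖) atTop atTop :=
      hMtop.comp hψ.tendsto_atTop
    have hw' : Tendsto (fun m => ‖E' m‖⁻¹ • E' m) atTop (𝓝 z) := hwz
    -- z has norm 1
    have hzne : z ≠ 0 := by
      intro hz0
      have h1 : Tendsto (fun m => ‖(‖E' m‖⁻¹ • E' m : Fin n → ℂ)‖) atTop (𝓝 ‖z‖) :=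
        hw'.norm
      have h2 : ∀ᶠ m in atTop, ‖(‖E' m‖⁻¹ • E' m : Fin n → ℂ)‖ = 1 := by
        filter_upwards [hM'top.eventually_ge_atTop 1] with m hm
        rw [norm_smul]
        simp only [norm_inv, norm_norm]
        rw [inv_mul_cancel₀ (by linarith : ‖E' m‖ ≠ 0)]
      have h3 : Tendsto (fun _ : ℕ => (1:ℝ)) atTop (𝓝 ‖z‖) :=
        Tendsto.congr' (by filter_upwards [h2] with m hm using hm) h1
      have := tendsto_nhds_unique h3 tendsto_const_nhds
      rw [hz0, norm_zero] at this
      norm_num at this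
    obtain ⟨j0, hj0⟩ : ∃ j, z j ≠ 0 := by
      by_contra h
      push_neg at h
      exact hzne (funext h)
    set J : Finset (Fin n) := univ.filter (fun j => z j ≠ 0) with hJdef
    have hJne : J.Nonempty := ⟨j0, by simp [hJdef, hj0]⟩
    set δ0 : ℝ := J.inf' hJne (fun j => ‖z j‖) with hδ0def
    have hδ0pos : 0 < δ0 := by
      rw [hδ0def, Finset.lt_inf'_iff]
      intro j hj
      have : z j ≠ 0 := by simpa [hJdef] using hj
      exact norm_pos_iff.2 this
    have hδ0le : ∀ j ∈ J, δ0 ≤ ‖z j‖ := fun j hj => Finset.inf'_le _ hj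
    set δ : ℝ := δ0 / 2 with hδdef
    have hδpos : 0 < δ := by positivity
    -- componentwise convergence of the normalized sequence
    have hcomp : ∀ k, Tendsto (fun m => ‖E' m‖⁻¹ * E' m k) atTop (𝓝 (z k)) := by
      intro k
      have := (tendsto_pi_nhds.1 hw') k
      simpa [Pi.smul_apply, smul_eq_mul] using this
    -- eventual hypotheses
    have hev_out : ∀ k, k ∉ J → ∀ᶠ m in atTop, ‖E' m k‖ ≤ δ * ‖E' m‖ / 2 := by
      intro k hk
      have hzk : z k = 0 := by
        by_contra h
        exact hk (by simp [hJdef, h])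
      have h1 : Tendsto (fun m => ‖‖E' m‖⁻¹ * E' m k‖) atTop (𝓝 0) := by
        simpa [hzk] using (hcomp k).norm
      have h2 : ∀ᶠ m in atTop, ‖‖E' m‖⁻¹ * E' m k‖ ≤ δ/4 := by
        have := h1.eventually (eventually_le_nhds (show (0:ℝ) < δ/4 by positivity))
        filter_upwards [this] with m hm using hm
      filter_upwards [h2, hM'top.eventually_ge_atTop 1] with m hm hm1
      have hMpos : (0:ℝ) < ‖E' m‖ := lt_of_lt_of_le one_pos hm1
      have hkey : ‖E' m k‖ = ‖E' m‖ * ‖(↑(‖E' m‖⁻¹) : ℂ) * E' m k‖ := by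
        rw [norm_mul, Complex.norm_real, norm_inv, norm_norm, ← mul_assoc,
          mul_inv_cancel₀ hMpos.ne', one_mul]
      rw [hkey]
      calc ‖E' m‖ * ‖‖E' m‖⁻¹ * E' m k‖ ≤ ‖E' m‖ * (δ/4) := by
            exact mul_le_mul_of_nonneg_left hm hMpos.le
        _ ≤ δ * ‖E' m‖ / 2 := by nlinarith
    have hev_in : ∀ j, j ∈ J → ∀ᶠ m in atTop, 3/2 * (δ * ‖E' m‖) ≤ ‖E' m j‖ := by
      intro j hj
      have h1 : Tendsto (fun m => ‖‖E' m‖⁻¹ * E' m j‖) atTop (𝓝 ‖z j‖) := (hcomp j).norm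
      have h2 : ∀ᶠ m in atTop, 3/2 * δ ≤ ‖‖E' m‖⁻¹ * E' m j‖ := by
        have hlt : 3/2 * δ < ‖z j‖ := by
          have := hδ0le j hj
          rw [hδdef] at *
          linarith
        exact h1.eventually (eventually_ge_nhds hlt)
      filter_upwards [h2, hM'top.eventually_ge_atTop 1] with m hm hm1
      have hMpos : (0:ℝ) < ‖E' m‖ := lt_of_lt_of_le one_pos hm1
      have hkey : ‖E' m j‖ = ‖E' m‖ * ‖(↑(‖E' m‖⁻¹) : ℂ) * E' m j‖ := by
        rw [norm_mul, Complex.norm_real, norm_inv, norm_norm, ← mul_assoc,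
          mul_inv_cancel₀ hMpos.ne', one_mul]
      rw [hkey]
      calc 3/2 * (δ * ‖E' m‖) = ‖E' m‖ * (3/2 * δ) := by ring
        _ ≤ ‖E' m‖ * ‖‖E' m‖⁻¹ * E' m j‖ := mul_le_mul_of_nonneg_left hm hMpos.le
    -- the estimate holds eventually
    have hev_est : ∀ᶠ m in atTop, ‖∑ j ∈ J, (fmap n (E' m) j)⁻¹‖
        ≤ (2 + 2 * (2/δ)^n) / ‖E' m‖^n := by
      have hout' : ∀ᶠ m in atTop, ∀ k ∉ J, ‖E' m k‖ ≤ δ * ‖E' m‖ / 2 := by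
        rw [Filter.eventually_all]
        intro k
        by_cases hk : k ∈ J
        · filter_upwards with m hk' ; exact absurd hk hk'
        · filter_upwards [hev_out k hk] with m hm _; exact hm
      have hin' : ∀ᶠ m in atTop, ∀ j ∈ J, 3/2 * (δ * ‖E' m‖) ≤ ‖E' m j‖ := by
        rw [Filter.eventually_all]
        intro j
        by_cases hj : j ∈ J
        · filter_upwards [hev_in j hj] with m hm _; exact hm
        · filter_upwards with m hj'; exact absurd hj' hj
      filter_upwards [hout', hin', hM'top.eventually_ge_atTop 1] with m h1 h2 hm1
      exact key_estimate n (E' m) (hE'mem m).1 (hE'mem m).2 J hδpos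
        (lt_of_lt_of_le one_pos hm1) (fun k => norm_le_pi_norm (E' m) k) h1 h2
    -- the bound tends to zero
    have hbnd0 : Tendsto (fun m => (2 + 2 * (2/δ)^n) / ‖E' m‖^n) atTop (𝓝 0) := by
      apply Tendsto.div_atTop (tendsto_const_nhds)
      exact (tendsto_pow_atTop (Nat.one_le_iff_ne_zero.mp hn)).comp hM'top
    have hS0 : Tendsto (fun m => ∑ j ∈ J, (fmap n (E' m) j)⁻¹) atTop (𝓝 0) :=
      squeeze_zero_norm' hev_est hbnd0
    have hSy : Tendsto (fun m => ∑ j ∈ J, (fmap n (E' m) j)⁻¹) atTop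
        (𝓝 (∑ j ∈ J, (y j)⁻¹)) := by
      apply tendsto_finset_sum
      intro j _
      exact ((tendsto_pi_nhds.1 hfE'y) j).inv₀ (hy.1 j)
    exact hy.2 J hJne (tendsto_nhds_unique hSy hS0)
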